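/- Let α_1,…,α_d > 0 and let p_π be the Bayesian predictive distribution based on the gamma prior π(λ) = ∏_{i=1}^d λ_i^{β_i−1} e^{−α_iλ_i}, which equals p_π(y|x) = ∏_{i=1}^d ((r+α_i)/(r+s+α_i))^{x_i+β_i} (s/(r+s+α_i))^{y_i} Γ(x_i+y_i+β_i)/(Γ(x_i+β_i) y_i!). Then the Kullback–Leibler risk of p_π has no upper bound: for every M > 0 there exists λ ∈ (0,∞)^d such that the K-L risk of p_π at λ exceeds M. -/

import Mathlib

open MeasureTheory Real Filter

noncomputable section

/-- The positive orthant `(0,∞)^d`. -/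
def posOrthant (d : ℕ) : Set (Fin d → ℝ) := {lam | ∀ i, 0 < lam i}

/-- Poisson probability mass function with mean `μ`. -/
noncomputable def poissonPMF (μ : ℝ) (k : ℕ) : ℝ :=
  Real.exp (-μ) * μ ^ k / (Nat.factorial k)

/-- Joint pmf of independent Poisson components with means `rate i * lam i`. -/
noncomputable def prodPoisson {d : ℕ} (rate lam : Fin d → ℝ) (x : Fin d → ℕ) : ℝ :=
  ∏ i, poissonPMF (rate i * lam i) (x i)

/-- Kullback–Leibler risk of a predictive distribution `q` at parameter `lam`. -/
noncomputable def klRisk {d : ℕ} (rx ry lam : Fin d → ℝ)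
    (q : (Fin d → ℕ) → (Fin d → ℕ) → ℝ) : ℝ :=
  ∑' x : Fin d → ℕ, prodPoisson rx lam x *
    ∑' y : Fin d → ℕ, prodPoisson ry lam y * Real.log (prodPoisson ry lam y / q x y)

/-- The Bayesian predictive distribution based on the gamma prior
`π(λ) = ∏ λ_i^{β_i-1} e^{-α_i λ_i}`, in closed form. -/
noncomputable def gammaPred {d : ℕ} (r s : ℝ) (β αg : Fin d → ℝ) (x y : Fin d → ℕ) : ℝ :=
  ∏ i, ((r + αg i) / (r + s + αg i)) ^ ((x i : ℝ) + β i) *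
    (s / (r + s + αg i)) ^ (y i) *
    (Real.Gamma ((x i : ℝ) + (y i : ℝ) + β i) /
      (Real.Gamma ((x i : ℝ) + β i) * (Nat.factorial (y i))))

set_option maxHeartbeats 1000000

open Topology

/- ## log inequalities -/

lemma one_sub_inv_le_log {x : ℝ} (hx : 0 < x) : 1 - 1/x ≤ Real.log x := by
  have h := Real.log_le_sub_one_of_pos (x := x⁻¹) (by positivity)
  rw [Real.log_inv] at h
  have : 1 - 1/x ≤ -(x⁻¹ - 1) := by rw [one_div]; ring_nf; linarith [h]
  linarith [h]

lemma one_sub_inv_lt_log {x : ℝ} (hx : 0 < x) (hx1 : x ≠ 1) : 1 - 1/x < Real.log x := by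
  have h := Real.log_lt_sub_one_of_pos (x := x⁻¹) (by positivity)
    (fun h => hx1 (inv_eq_one.mp h))
  rw [Real.log_inv] at h
  rw [one_div]
  linarith [h]

lemma mul_log_le_tangent {z u : ℝ} (hz : 0 < z) (hu : 0 < u) :
    z * Real.log z ≤ z * Real.log u + z^2/u - z := by
  have h : Real.log (z/u) ≤ z/u - 1 := Real.log_le_sub_one_of_pos (by positivity)
  rw [Real.log_div (ne_of_gt hz) (ne_of_gt hu)] at h
  have := mul_le_mul_of_nonneg_left h (le_of_lt hz)
  have hz2 : z * (z/u - 1) = z^2/u - z := by ring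
  nlinarith [this]

lemma mul_log_ge_tangent {z v : ℝ} (hz : 0 < z) (hv : 0 < v) :
    v * Real.log v + (1 + Real.log v) * (z - v) ≤ z * Real.log z := by
  have h : 1 - 1/(z/v) ≤ Real.log (z/v) := one_sub_inv_le_log (by positivity)
  rw [Real.log_div (ne_of_gt hz) (ne_of_gt hv)] at h
  have h2 : 1 - v/z ≤ Real.log z - Real.log v := by
    have : 1/(z/v) = v/z := by field_simp
    rw [this] at h; exact h
  have := mul_le_mul_of_nonneg_left h2 (le_of_lt hz)
  have hvz : z * (1 - v/z) = z - v := by field_simp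
  nlinarith [this]

/- ## Gamma -/

lemma Gamma_add_nat {a : ℝ} (ha : 0 < a) (k : ℕ) :
    Real.Gamma (a + k) = (∏ j ∈ Finset.range k, (a + j)) * Real.Gamma a := by
  induction k with
  | zero => simp
  | succ k ih =>
    have hk : a + k ≠ 0 := by positivity
    have : a + (k+1 : ℕ) = (a + k) + 1 := by push_cast; ring
    rw [this, Real.Gamma_add_one hk, ih, Finset.prod_range_succ]
    ring

lemma log_Gamma_ratio {a : ℝ} (ha : 0 < a) (k : ℕ) :
    Real.log (Real.Gamma (a + k)) - Real.log (Real.Gamma a)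
      = ∑ j ∈ Finset.range k, Real.log (a + j) := by
  rw [Gamma_add_nat ha k, Real.log_mul (by
      apply ne_of_gt; apply Finset.prod_pos; intro j _; positivity)
    (ne_of_gt (Real.Gamma_pos_of_pos ha)), Real.log_prod]
  · ring
  · intro j _; positivity

lemma sum_log_le {a : ℝ} (ha : 0 < a) (k : ℕ) :
    ∑ j ∈ Finset.range k, Real.log (a + j)
      ≤ (a + k) * Real.log (a + k) - a * Real.log a - k := by
  induction k with
  | zero => simp
  | succ k ih =>
    rw [Finset.sum_range_succ]
    have hw : (0:ℝ) < a + k := by positivity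
    have key : Real.log (a + k) + 1 ≤ (a + k + 1) * Real.log (a + k + 1) - (a + k) * Real.log (a + k) := by
      have h1 : 1 - 1/((a+k+1)/(a+k)) ≤ Real.log ((a+k+1)/(a+k)) :=
        one_sub_inv_le_log (by positivity)
      rw [Real.log_div (by positivity) (ne_of_gt hw)] at h1
      have h2 : 1/((a+(k:ℝ)+1)/(a+k)) = (a+k)/(a+k+1) := by
        rw [one_div, inv_div]
      rw [h2] at h1
      have h4 := mul_le_mul_of_nonneg_left h1 (show (0:ℝ) ≤ a+k+1 by positivity)
      have h5 : (a+(k:ℝ)+1) * (1 - (a+k)/(a+k+1)) = 1 := by field_simp; ring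
      nlinarith [h4]
    push_cast
    have e : a + ((k:ℝ)+1) = a + (k:ℝ) + 1 := by ring
    rw [e]
    linarith [ih, key]

/- ## Poisson facts -/

lemma poissonPMF_pos {μ : ℝ} (hμ : 0 < μ) (k : ℕ) : 0 < poissonPMF μ k := by
  unfold poissonPMF
  positivity

lemma poissonPMF_nonneg {μ : ℝ} (hμ : 0 < μ) (k : ℕ) : 0 ≤ poissonPMF μ k :=
  le_of_lt (poissonPMF_pos hμ k)

lemma poissonPMF_eq {μ : ℝ} (k : ℕ) :
    poissonPMF μ k = Real.exp (-μ) * (μ ^ k / (Nat.factorial k)) := by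
  unfold poissonPMF; ring

lemma summable_pow_div_fact (μ : ℝ) : Summable (fun k : ℕ => μ ^ k / (Nat.factorial k)) :=
  Real.summable_pow_div_factorial μ

lemma tsum_pow_div_fact (μ : ℝ) : ∑' k : ℕ, μ ^ k / (Nat.factorial k : ℝ) = Real.exp μ := by
  rw [Real.exp_eq_exp_ℝ, NormedSpace.exp_eq_tsum_div]

lemma poisson_summable (μ : ℝ) : Summable (poissonPMF μ) := by
  have := (summable_pow_div_fact μ).mul_left (Real.exp (-μ))
  exact this.congr (fun k => (poissonPMF_eq k).symm)

lemma poisson_tsum (μ : ℝ) : ∑' k : ℕ, poissonPMF μ k = 1 := by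
  have : ∑' k : ℕ, poissonPMF μ k = Real.exp (-μ) * ∑' k : ℕ, (μ ^ k / (Nat.factorial k : ℝ)) := by
    rw [← tsum_mul_left]
    exact tsum_congr fun k => poissonPMF_eq k
  rw [this, tsum_pow_div_fact, ← Real.exp_add]
  simp

lemma poisson_succ (μ : ℝ) (k : ℕ) : poissonPMF μ (k+1) = μ / (k+1) * poissonPMF μ k := by
  unfold poissonPMF
  rw [Nat.factorial_succ]
  push_cast
  have : (k:ℝ) + 1 ≠ 0 := by positivity
  field_simp
  ring

lemma poisson_mul_succ (μ : ℝ) (k : ℕ) :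
    poissonPMF μ (k+1) * ((k:ℝ)+1) = μ * poissonPMF μ k := by
  rw [poisson_succ]
  have : (k:ℝ) + 1 ≠ 0 := by positivity
  field_simp

lemma poisson_mean_summable (μ : ℝ) : Summable (fun k : ℕ => poissonPMF μ k * k) := by
  rw [← summable_nat_add_iff 1]
  apply Summable.congr ((poisson_summable μ).mul_left μ)
  intro k
  push_cast
  rw [← poisson_mul_succ]

lemma poisson_mean (μ : ℝ) : ∑' k : ℕ, poissonPMF μ k * k = μ := by
  rw [Summable.tsum_eq_zero_add (poisson_mean_summable μ)]
  simp only [Nat.cast_zero, mul_zero, zero_add, Nat.cast_add, Nat.cast_one]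
  have : ∀ k : ℕ, poissonPMF μ (k+1) * ((k:ℝ)+1) = μ * poissonPMF μ k := poisson_mul_succ μ
  rw [tsum_congr this, tsum_mul_left, poisson_tsum, mul_one]

lemma poisson_sq_summable (μ : ℝ) : Summable (fun k : ℕ => poissonPMF μ k * (k:ℝ)^2) := by
  rw [← summable_nat_add_iff 1]
  apply Summable.congr (((poisson_mean_summable μ).add (poisson_summable μ)).mul_left μ)
  intro k
  push_cast
  have h := poisson_mul_succ μ k
  calc μ * (poissonPMF μ k * ↑k + poissonPMF μ k)
      = (μ * poissonPMF μ k) * ((k:ℝ)+1) := by ring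
    _ = poissonPMF μ (k+1) * ((k:ℝ)+1) * ((k:ℝ)+1) := by rw [h]
    _ = poissonPMF μ (k+1) * ((k:ℝ)+1)^2 := by ring

lemma poisson_sq_moment (μ : ℝ) : ∑' k : ℕ, poissonPMF μ k * (k:ℝ)^2 = μ^2 + μ := by
  rw [Summable.tsum_eq_zero_add (poisson_sq_summable μ)]
  simp only [Nat.cast_zero, zero_pow, mul_zero, zero_add]
  have h : ∀ k : ℕ, poissonPMF μ (k+1) * ((k+1:ℕ):ℝ)^2
      = μ * (poissonPMF μ k * k) + μ * poissonPMF μ k := by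
    intro k
    push_cast
    have h := poisson_mul_succ μ k
    calc poissonPMF μ (k+1) * ((k:ℝ)+1)^2 = poissonPMF μ (k+1) * ((k:ℝ)+1) * ((k:ℝ)+1) := by ring
      _ = μ * poissonPMF μ k * ((k:ℝ)+1) := by rw [h]
      _ = μ * (poissonPMF μ k * ↑k) + μ * poissonPMF μ k := by ring
  rw [tsum_congr h, Summable.tsum_add ((poisson_mean_summable μ).mul_left μ) ((poisson_summable μ).mul_left μ),
    tsum_mul_left, tsum_mul_left, poisson_mean, poisson_tsum]
  ring

/-- Summability and value of Poisson-weighted quadratics. -/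
lemma poisson_poly_summable (μ : ℝ) (A B C : ℝ) :
    Summable (fun k : ℕ => poissonPMF μ k * (A + B * k + C * (k:ℝ)^2)) := by
  have : ∀ k : ℕ, poissonPMF μ k * (A + B * k + C * (k:ℝ)^2)
      = A * poissonPMF μ k + B * (poissonPMF μ k * k) + C * (poissonPMF μ k * (k:ℝ)^2) := by
    intro k; ring
  exact Summable.congr ((((poisson_summable μ).mul_left A).add
    ((poisson_mean_summable μ).mul_left B)).add ((poisson_sq_summable μ).mul_left C))
    (fun k => (this k).symm)

lemma poisson_poly_tsum (μ : ℝ) (A B C : ℝ) :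
    ∑' k : ℕ, poissonPMF μ k * (A + B * k + C * (k:ℝ)^2) = A + B * μ + C * (μ^2 + μ) := by
  have h : ∀ k : ℕ, poissonPMF μ k * (A + B * k + C * (k:ℝ)^2)
      = A * poissonPMF μ k + B * (poissonPMF μ k * k) + C * (poissonPMF μ k * (k:ℝ)^2) := by
    intro k; ring
  rw [tsum_congr h,
    Summable.tsum_add (((poisson_summable μ).mul_left A).add ((poisson_mean_summable μ).mul_left B))
      ((poisson_sq_summable μ).mul_left C),
    Summable.tsum_add ((poisson_summable μ).mul_left A) ((poisson_mean_summable μ).mul_left B),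
    tsum_mul_left, tsum_mul_left, tsum_mul_left, poisson_tsum, poisson_mean, poisson_sq_moment]
  ring


set_option maxHeartbeats 1000000

instance uniqueFinZero : Unique (Fin 0 → ℕ) :=
  ⟨⟨fun i => i.elim0⟩, fun f => funext fun i => i.elim0⟩

lemma cons_prod_eq {d : ℕ} (f : Fin (d+1) → ℕ → ℝ) (z : ℕ × (Fin d → ℕ)) :
    (∏ i, f i (Fin.cons (α := fun _ => ℕ) z.1 z.2 i)) = f 0 z.1 * ∏ i : Fin d, f i.succ (z.2 i) := by
  rw [Fin.prod_univ_succ]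
  simp

lemma pi_abs_summable : ∀ {d : ℕ} (f : Fin d → ℕ → ℝ), (∀ i, Summable fun k => |f i k|) →
    Summable fun x : Fin d → ℕ => |∏ i, f i (x i)| := by
  intro d
  induction d with
  | zero =>
    intro f _
    exact Summable.of_finite
  | succ d ih =>
    intro f h
    have h1 : Summable fun k => ‖f 0 k‖ :=
      (h 0).congr (fun k => (Real.norm_eq_abs _).symm)
    have h2 : Summable fun b : Fin d → ℕ => ‖∏ i : Fin d, f i.succ (b i)‖ :=
      (ih (fun i => f i.succ) (fun i => h i.succ)).congr (fun b => (Real.norm_eq_abs _).symm)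
    have main : ∀ (g : (Fin d → ℕ) → ℝ), Summable (fun b => ‖g b‖) →
        Summable fun z : ℕ × (Fin d → ℕ) => ‖f 0 z.1 * g z.2‖ :=
      fun g hg => Summable.mul_norm h1 hg
    have hmul : Summable fun z : ℕ × (Fin d → ℕ) =>
        ‖f 0 z.1 * ∏ i : Fin d, f i.succ (z.2 i)‖ :=
      main (fun b => ∏ i : Fin d, f i.succ (b i)) h2
    apply ((Fin.consEquiv (fun _ => ℕ)).summable_iff
      (f := fun x : Fin (d+1) → ℕ => |∏ i, f i (x i)|)).mp
    apply hmul.congr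
    intro z
    simp only [Function.comp_apply, Real.norm_eq_abs]
    rw [show ((Fin.consEquiv (fun _ => ℕ)) z : Fin (d+1) → ℕ)
        = Fin.cons (α := fun _ => ℕ) z.1 z.2 from rfl,
      cons_prod_eq f z, abs_mul]

lemma pi_summable {d : ℕ} (f : Fin d → ℕ → ℝ) (h : ∀ i, Summable fun k => |f i k|) :
    Summable fun x : Fin d → ℕ => ∏ i, f i (x i) :=
  (pi_abs_summable f h).of_abs

lemma pi_tsum : ∀ {d : ℕ} (f : Fin d → ℕ → ℝ), (∀ i, Summable fun k => |f i k|) →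
    ∑' x : Fin d → ℕ, ∏ i, f i (x i) = ∏ i, ∑' k, f i k := by
  intro d
  induction d with
  | zero =>
    intro f _
    rw [tsum_eq_single (default : Fin 0 → ℕ) (fun b hb => absurd (Subsingleton.elim b default) hb)]
    simp
  | succ d ih =>
    intro f h
    rw [← Equiv.tsum_eq (Fin.consEquiv (fun _ => ℕ)) (fun x => ∏ i, f i (x i))]
    have key : ∀ z : ℕ × (Fin d → ℕ),
        (∏ i, f i ((Fin.consEquiv (fun _ => ℕ)) z i)) = f 0 z.1 * ∏ i : Fin d, f i.succ (z.2 i) := by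
      intro z
      rw [show ((Fin.consEquiv (fun _ => ℕ)) z : Fin (d+1) → ℕ)
          = Fin.cons (α := fun _ => ℕ) z.1 z.2 from rfl]
      exact cons_prod_eq f z
    have h1 : Summable fun k => ‖f 0 k‖ :=
      (h 0).congr (fun k => (Real.norm_eq_abs _).symm)
    have h2 : Summable fun b : Fin d → ℕ => ‖∏ i : Fin d, f i.succ (b i)‖ :=
      (pi_abs_summable (fun i => f i.succ) (fun i => h i.succ)).congr
        (fun b => (Real.norm_eq_abs _).symm)
    have tm : ∀ (g : (Fin d → ℕ) → ℝ), Summable (fun b => ‖g b‖) →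
        (∑' k, f 0 k) * (∑' b : Fin d → ℕ, g b) = ∑' z : ℕ × (Fin d → ℕ), f 0 z.1 * g z.2 :=
      fun g hg => tsum_mul_tsum_of_summable_norm h1 hg
    rw [tsum_congr key, ← tm (fun b => ∏ i : Fin d, f i.succ (b i)) h2,
      ih (fun i => f i.succ) (fun i => h i.succ), Fin.prod_univ_succ]

/-- Key pointwise identity for updated product. -/
lemma update_prod_eq {d : ℕ} (p w : ℕ → ℝ) (i : Fin d) (y : Fin d → ℕ) :
    (∏ j, Function.update (fun _ : Fin d => p) i (fun k => p k * w k) j (y j))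
      = (∏ j, p (y j)) * w (y i) := by
  classical
  rw [← Finset.mul_prod_erase Finset.univ _ (Finset.mem_univ i),
      ← Finset.mul_prod_erase Finset.univ (fun j => p (y j)) (Finset.mem_univ i)]
  rw [Function.update_self]
  have h : ∀ j ∈ Finset.univ.erase i,
      Function.update (fun _ : Fin d => p) i (fun k => p k * w k) j (y j) = p (y j) := by
    intro j hj
    rw [Function.update_of_ne (Finset.ne_of_mem_erase hj)]
  rw [Finset.prod_congr rfl h]
  ring

lemma update_summable {d : ℕ} (p w : ℕ → ℝ) (hp : Summable fun k => |p k|)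
    (hw : Summable fun k => |p k * w k|) (i : Fin d) :
    ∀ j, Summable fun k => |Function.update (fun _ : Fin d => p) i (fun k => p k * w k) j k| := by
  intro j
  rcases eq_or_ne j i with rfl | hne
  · rw [Function.update_self]; exact hw
  · rw [Function.update_of_ne hne]; exact hp

lemma pi_weight_summable {d : ℕ} (p w : ℕ → ℝ) (hp : Summable fun k => |p k|)
    (hw : Summable fun k => |p k * w k|) (i : Fin d) :
    Summable fun y : Fin d → ℕ => (∏ j, p (y j)) * w (y i) := by
  apply (pi_summable _ (update_summable p w hp hw i)).congr
  intro y
  exact update_prod_eq p w i y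

lemma pi_weight_tsum {d : ℕ} (p w : ℕ → ℝ) (hp : Summable fun k => |p k|)
    (hp1 : ∑' k, p k = 1) (hw : Summable fun k => |p k * w k|) (i : Fin d) :
    ∑' y : Fin d → ℕ, (∏ j, p (y j)) * w (y i) = ∑' k, p k * w k := by
  classical
  rw [tsum_congr (fun y => (update_prod_eq p w i y).symm),
    pi_tsum _ (update_summable p w hp hw i),
    ← Finset.mul_prod_erase Finset.univ _ (Finset.mem_univ i)]
  have h1 : (∑' k, Function.update (fun _ : Fin d => p) i (fun k => p k * w k) i k)
      = ∑' k, p k * w k := by rw [Function.update_self]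
  have h2 : ∀ j ∈ Finset.univ.erase i,
      (∑' k, Function.update (fun _ : Fin d => p) i (fun k => p k * w k) j k) = 1 := by
    intro j hj
    rw [Function.update_of_ne (Finset.ne_of_mem_erase hj)]
    exact hp1
  rw [h1, Finset.prod_congr rfl h2, Finset.prod_const_one, mul_one]

/-- single-coordinate predictive factor -/
noncomputable def q1 (r s α b : ℝ) (x k : ℕ) : ℝ :=
  ((r + α) / (r + s + α)) ^ ((x : ℝ) + b) * (s / (r + s + α)) ^ k *
    (Real.Gamma ((x : ℝ) + (k : ℝ) + b) / (Real.Gamma ((x : ℝ) + b) * (Nat.factorial k)))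

noncomputable def L1 (r s α b Λ : ℝ) (x k : ℕ) : ℝ :=
  Real.log (poissonPMF (s * Λ) k / q1 r s α b x k)

noncomputable def lcE (r s α : ℝ) : ℝ := Real.log ((r + α) / (r + s + α))
noncomputable def ltE (r s α : ℝ) : ℝ := Real.log (s / (r + s + α))
noncomputable def uE (r s b Λ : ℝ) : ℝ := r * Λ + b + s * Λ
noncomputable def vE (r b Λ : ℝ) : ℝ := r * Λ + b

lemma q1_pos {r s α b : ℝ} (hr : 0 < r) (hs : 0 < s) (hα : 0 < α) (hb : 0 < b) (x k : ℕ) :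
    0 < q1 r s α b x k := by
  unfold q1
  have h1 : (0:ℝ) < (r + α) / (r + s + α) := by positivity
  have h2 : (0:ℝ) < s / (r + s + α) := by positivity
  have h3 : 0 < Real.Gamma ((x : ℝ) + (k : ℝ) + b) := Real.Gamma_pos_of_pos (by positivity)
  have h4 : 0 < Real.Gamma ((x : ℝ) + b) := Real.Gamma_pos_of_pos (by positivity)
  have h5 : (0:ℝ) < (Nat.factorial k : ℝ) := by exact_mod_cast Nat.factorial_pos k
  have := Real.rpow_pos_of_pos h1 ((x : ℝ) + b)
  positivity

lemma L1_decomp {r s α b Λ : ℝ} (hr : 0 < r) (hs : 0 < s) (hα : 0 < α) (hb : 0 < b)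
    (hΛ : 0 < Λ) (x k : ℕ) :
    L1 r s α b Λ x k = -(s*Λ) + k * Real.log (s*Λ) - k * ltE r s α
      - ((x:ℝ)+b) * lcE r s α - ∑ j ∈ Finset.range k, Real.log ((x:ℝ) + b + j) := by
  have hm : (0:ℝ) < s * Λ := by positivity
  have hK : (0:ℝ) < (x:ℝ) + b := by positivity
  have h1 : (0:ℝ) < (r + α) / (r + s + α) := by positivity
  have h2 : (0:ℝ) < s / (r + s + α) := by positivity
  have h3 : 0 < Real.Gamma ((x : ℝ) + (k : ℝ) + b) := Real.Gamma_pos_of_pos (by positivity)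
  have h4 : 0 < Real.Gamma ((x : ℝ) + b) := Real.Gamma_pos_of_pos (by positivity)
  have h5 : (0:ℝ) < (Nat.factorial k : ℝ) := by exact_mod_cast Nat.factorial_pos k
  have hrp : (0:ℝ) < ((r + α) / (r + s + α)) ^ ((x : ℝ) + b) := Real.rpow_pos_of_pos h1 _
  have hq : 0 < q1 r s α b x k := q1_pos hr hs hα hb x k
  have hp : 0 < poissonPMF (s*Λ) k := poissonPMF_pos hm k
  unfold L1
  rw [Real.log_div (ne_of_gt hp) (ne_of_gt hq)]
  have hlogp : Real.log (poissonPMF (s*Λ) k)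
      = -(s*Λ) + k * Real.log (s*Λ) - Real.log (Nat.factorial k) := by
    unfold poissonPMF
    rw [Real.log_div (by positivity) (ne_of_gt h5), Real.log_mul (by positivity) (by positivity),
      Real.log_exp, Real.log_pow]
  have hlogq : Real.log (q1 r s α b x k)
      = ((x:ℝ)+b) * lcE r s α + k * ltE r s α
        + (∑ j ∈ Finset.range k, Real.log ((x:ℝ) + b + j)) - Real.log (Nat.factorial k) := by
    unfold q1
    rw [Real.log_mul (by positivity) (by positivity), Real.log_mul (ne_of_gt hrp) (by positivity),
      Real.log_rpow h1, Real.log_pow,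
      Real.log_div (ne_of_gt h3) (by positivity), Real.log_mul (ne_of_gt h4) (ne_of_gt h5)]
    have harg : (x : ℝ) + (k : ℝ) + b = ((x:ℝ) + b) + (k:ℕ) := by push_cast; ring
    rw [harg]
    have hΓ := log_Gamma_ratio hK k
    unfold lcE ltE
    linarith [hΓ]
  rw [hlogp, hlogq]
  ring

/-- absolute bound for the log-Gamma-ratio sum -/
lemma sum_log_abs_le {b : ℝ} (hb : 0 < b) (x k : ℕ) :
    |∑ j ∈ Finset.range k, Real.log ((x:ℝ) + b + j)|
      ≤ k * (|Real.log b| + (((x:ℝ) + b) + k)) := by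
  calc |∑ j ∈ Finset.range k, Real.log ((x:ℝ) + b + j)|
      ≤ ∑ j ∈ Finset.range k, |Real.log ((x:ℝ) + b + j)| := Finset.abs_sum_le_sum_abs _ _
    _ ≤ ∑ _j ∈ Finset.range k, (|Real.log b| + (((x:ℝ) + b) + k)) := by
        apply Finset.sum_le_sum
        intro j hj
        have hj' : (j:ℝ) ≤ k := by
          exact_mod_cast le_of_lt (Finset.mem_range.mp hj)
        have hpos : (0:ℝ) < (x:ℝ) + b + j := by positivity
        rw [abs_le]
        constructor
        · have h1 : Real.log b ≤ Real.log ((x:ℝ) + b + j) := by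
            apply Real.log_le_log hb
            linarith [Nat.cast_nonneg (α := ℝ) x, Nat.cast_nonneg (α := ℝ) j]
          have h2 : -|Real.log b| ≤ Real.log b := neg_abs_le _
          have h3 : (0:ℝ) ≤ ((x:ℝ)+b) + k := by positivity
          linarith
        · have h1 : Real.log ((x:ℝ) + b + j) ≤ (x:ℝ) + b + j - 1 :=
            Real.log_le_sub_one_of_pos hpos
          have h2 : (0:ℝ) ≤ |Real.log b| := abs_nonneg _
          linarith
    _ = k * (|Real.log b| + (((x:ℝ) + b) + k)) := by
        rw [Finset.sum_const, Finset.card_range, nsmul_eq_mul]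

/-- pointwise lower bound in quadratic-in-k form -/
lemma L1_lb {r s α b Λ : ℝ} (hr : 0 < r) (hs : 0 < s) (hα : 0 < α) (hb : 0 < b)
    (hΛ : 0 < Λ) (x k : ℕ) :
    (-(s*Λ) - ((x:ℝ)+b)*lcE r s α - ((x:ℝ)+b)*Real.log (uE r s b Λ)
        - ((x:ℝ)+b)^2/(uE r s b Λ) + ((x:ℝ)+b)
        + vE r b Λ * Real.log (vE r b Λ)
        + (1 + Real.log (vE r b Λ))*(((x:ℝ)+b) - vE r b Λ))
      + ((Real.log (s*Λ) - ltE r s α) - Real.log (uE r s b Λ) - 2*((x:ℝ)+b)/(uE r s b Λ) + 2) * k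
      + (-1/(uE r s b Λ)) * (k:ℝ)^2
      ≤ L1 r s α b Λ x k := by
  have hK : (0:ℝ) < (x:ℝ) + b := by positivity
  have hKk : (0:ℝ) < ((x:ℝ) + b) + k := by positivity
  have hu : (0:ℝ) < uE r s b Λ := by unfold uE; positivity
  have hv : (0:ℝ) < vE r b Λ := by unfold vE; positivity
  rw [L1_decomp hr hs hα hb hΛ x k]
  have hS : ∑ j ∈ Finset.range k, Real.log ((x:ℝ) + b + j)
      ≤ (((x:ℝ)+b) + k) * Real.log (((x:ℝ)+b) + k) - ((x:ℝ)+b) * Real.log ((x:ℝ)+b) - k :=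
    sum_log_le hK k
  have hT : (((x:ℝ)+b) + k) * Real.log (((x:ℝ)+b) + k)
      ≤ (((x:ℝ)+b) + k) * Real.log (uE r s b Λ) + (((x:ℝ)+b) + k)^2/(uE r s b Λ)
        - (((x:ℝ)+b) + k) := mul_log_le_tangent hKk hu
  have hG : vE r b Λ * Real.log (vE r b Λ)
      + (1 + Real.log (vE r b Λ))*(((x:ℝ)+b) - vE r b Λ)
      ≤ ((x:ℝ)+b) * Real.log ((x:ℝ)+b) := mul_log_ge_tangent hK hv
  have hexp : (((x:ℝ)+b) + k)^2 = ((x:ℝ)+b)^2 + 2*((x:ℝ)+b)*k + (k:ℝ)^2 := by ring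
  have hdiv : (((x:ℝ)+b) + k)^2/(uE r s b Λ)
      = ((x:ℝ)+b)^2/(uE r s b Λ) + (2*((x:ℝ)+b)/(uE r s b Λ))*k
        + ((k:ℝ)^2)/(uE r s b Λ) := by
    rw [hexp]; field_simp
  have hq2 : (-1/(uE r s b Λ)) * (k:ℝ)^2 = -(((k:ℝ)^2)/(uE r s b Λ)) := by ring
  linarith [hS, hT, hG]

/-- pointwise absolute bound in quadratic-in-k form -/
lemma L1_abs {r s α b Λ : ℝ} (hr : 0 < r) (hs : 0 < s) (hα : 0 < α) (hb : 0 < b)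
    (hΛ : 0 < Λ) (x k : ℕ) :
    |L1 r s α b Λ x k|
      ≤ (s*Λ + ((x:ℝ)+b)*|lcE r s α|)
        + (|Real.log (s*Λ)| + |ltE r s α| + |Real.log b| + ((x:ℝ)+b)) * k
        + 1 * (k:ℝ)^2 := by
  rw [L1_decomp hr hs hα hb hΛ x k]
  have h1 := sum_log_abs_le (b := b) hb x k
  obtain ⟨hS1, hS2⟩ := abs_le.mp h1
  have hk0 : (0:ℝ) ≤ (k:ℝ) := Nat.cast_nonneg k
  have hK0 : (0:ℝ) ≤ (x:ℝ)+b := by positivity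
  have b1 : (k:ℝ) * Real.log (s*Λ) ≤ k * |Real.log (s*Λ)| :=
    mul_le_mul_of_nonneg_left (le_abs_self _) hk0
  have b1' : -((k:ℝ) * |Real.log (s*Λ)|) ≤ k * Real.log (s*Λ) := by
    have := mul_le_mul_of_nonneg_left (neg_abs_le (Real.log (s*Λ))) hk0
    linarith [this]
  have b2 : (k:ℝ) * ltE r s α ≤ k * |ltE r s α| :=
    mul_le_mul_of_nonneg_left (le_abs_self _) hk0
  have b2' : -((k:ℝ) * |ltE r s α|) ≤ k * ltE r s α := by
    have := mul_le_mul_of_nonneg_left (neg_abs_le (ltE r s α)) hk0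
    linarith [this]
  have b3 : ((x:ℝ)+b) * lcE r s α ≤ ((x:ℝ)+b) * |lcE r s α| :=
    mul_le_mul_of_nonneg_left (le_abs_self _) hK0
  have b3' : -(((x:ℝ)+b) * |lcE r s α|) ≤ ((x:ℝ)+b) * lcE r s α := by
    have := mul_le_mul_of_nonneg_left (neg_abs_le (lcE r s α)) hK0
    linarith [this]
  have hsl : (0:ℝ) ≤ s*Λ := by positivity
  rw [abs_le]
  constructor
  · nlinarith [hS2, b1', b2, b3]
  · nlinarith [hS1, b1, b2', b3']


noncomputable def QE (r s α b Λ : ℝ) (x : ℕ) : ℝ :=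
  (-(s*Λ) - ((x:ℝ)+b)*lcE r s α - ((x:ℝ)+b)*Real.log (uE r s b Λ)
      - ((x:ℝ)+b)^2/(uE r s b Λ) + ((x:ℝ)+b)
      + vE r b Λ * Real.log (vE r b Λ)
      + (1 + Real.log (vE r b Λ))*(((x:ℝ)+b) - vE r b Λ))
    + ((Real.log (s*Λ) - ltE r s α) - Real.log (uE r s b Λ) - 2*((x:ℝ)+b)/(uE r s b Λ) + 2) * (s*Λ)
    + (-1/(uE r s b Λ)) * ((s*Λ)^2 + s*Λ)

noncomputable def UBJ (r s α b Λ : ℝ) (x : ℕ) : ℝ :=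
  (s*Λ + ((x:ℝ)+b)*|lcE r s α|)
    + (|Real.log (s*Λ)| + |ltE r s α| + |Real.log b| + ((x:ℝ)+b)) * (s*Λ)
    + 1 * ((s*Λ)^2 + s*Λ)

noncomputable def EE (r s α b Λ : ℝ) : ℝ :=
  (s*Λ)*(Real.log (s*Λ) - ltE r s α) - vE r b Λ * lcE r s α
    - uE r s b Λ * Real.log (uE r s b Λ) + vE r b Λ * Real.log (vE r b Λ)
    - (r*Λ + s*Λ)/(uE r s b Λ)

section coordsum
variable {r s α b Λ : ℝ}

lemma inner_abs_summable (hr : 0 < r) (hs : 0 < s) (hα : 0 < α) (hb : 0 < b) (hΛ : 0 < Λ)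
    (x : ℕ) : Summable fun k => |poissonPMF (s*Λ) k * L1 r s α b Λ x k| := by
  have hm : (0:ℝ) < s*Λ := by positivity
  apply Summable.of_nonneg_of_le (fun k => abs_nonneg _)
    (f := fun k => poissonPMF (s*Λ) k *
      ((s*Λ + ((x:ℝ)+b)*|lcE r s α|)
        + (|Real.log (s*Λ)| + |ltE r s α| + |Real.log b| + ((x:ℝ)+b)) * k
        + 1 * (k:ℝ)^2))
  · intro k
    rw [abs_mul, abs_of_pos (poissonPMF_pos hm k)]
    exact mul_le_mul_of_nonneg_left (L1_abs hr hs hα hb hΛ x k)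
      (le_of_lt (poissonPMF_pos hm k))
  · exact poisson_poly_summable (s*Λ) _ _ _

lemma J_lb (hr : 0 < r) (hs : 0 < s) (hα : 0 < α) (hb : 0 < b) (hΛ : 0 < Λ) (x : ℕ) :
    QE r s α b Λ x ≤ ∑' k, poissonPMF (s*Λ) k * L1 r s α b Λ x k := by
  have hm : (0:ℝ) < s*Λ := by positivity
  have h := Summable.tsum_le_tsum (f := fun k => poissonPMF (s*Λ) k *
      ((-(s*Λ) - ((x:ℝ)+b)*lcE r s α - ((x:ℝ)+b)*Real.log (uE r s b Λ)
        - ((x:ℝ)+b)^2/(uE r s b Λ) + ((x:ℝ)+b)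
        + vE r b Λ * Real.log (vE r b Λ)
        + (1 + Real.log (vE r b Λ))*(((x:ℝ)+b) - vE r b Λ))
      + ((Real.log (s*Λ) - ltE r s α) - Real.log (uE r s b Λ)
          - 2*((x:ℝ)+b)/(uE r s b Λ) + 2) * k
      + (-1/(uE r s b Λ)) * (k:ℝ)^2))
    (g := fun k => poissonPMF (s*Λ) k * L1 r s α b Λ x k)
    (fun k => mul_le_mul_of_nonneg_left (L1_lb hr hs hα hb hΛ x k)
      (le_of_lt (poissonPMF_pos hm k)))
    (poisson_poly_summable (s*Λ) _ _ _)
    ((inner_abs_summable hr hs hα hb hΛ x).of_abs)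
  rwa [poisson_poly_tsum] at h

lemma J_ub (hr : 0 < r) (hs : 0 < s) (hα : 0 < α) (hb : 0 < b) (hΛ : 0 < Λ) (x : ℕ) :
    |∑' k, poissonPMF (s*Λ) k * L1 r s α b Λ x k| ≤ UBJ r s α b Λ x := by
  have hm : (0:ℝ) < s*Λ := by positivity
  have h1 : |∑' k, poissonPMF (s*Λ) k * L1 r s α b Λ x k|
      ≤ ∑' k, |poissonPMF (s*Λ) k * L1 r s α b Λ x k| := by
    have hsum' : Summable fun k => ‖poissonPMF (s*Λ) k * L1 r s α b Λ x k‖ :=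
      (inner_abs_summable hr hs hα hb hΛ x).congr (fun k => (Real.norm_eq_abs _).symm)
    have h0 := norm_tsum_le_tsum_norm hsum'
    rw [Real.norm_eq_abs] at h0
    calc |∑' k, poissonPMF (s*Λ) k * L1 r s α b Λ x k|
        ≤ ∑' k, ‖poissonPMF (s*Λ) k * L1 r s α b Λ x k‖ := h0
      _ = ∑' k, |poissonPMF (s*Λ) k * L1 r s α b Λ x k| :=
          tsum_congr fun k => Real.norm_eq_abs _
  have h2 : ∑' k, |poissonPMF (s*Λ) k * L1 r s α b Λ x k|
      ≤ ∑' k, poissonPMF (s*Λ) k *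
        ((s*Λ + ((x:ℝ)+b)*|lcE r s α|)
          + (|Real.log (s*Λ)| + |ltE r s α| + |Real.log b| + ((x:ℝ)+b)) * k
          + 1 * (k:ℝ)^2) := by
    apply Summable.tsum_le_tsum _ (inner_abs_summable hr hs hα hb hΛ x)
      (poisson_poly_summable (s*Λ) _ _ _)
    intro k
    rw [abs_mul, abs_of_pos (poissonPMF_pos hm k)]
    exact mul_le_mul_of_nonneg_left (L1_abs hr hs hα hb hΛ x k)
      (le_of_lt (poissonPMF_pos hm k))
  rw [poisson_poly_tsum] at h2
  unfold UBJ
  linarith [h1, h2]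

lemma UBJ_nonneg (hr : 0 < r) (hs : 0 < s) (hα : 0 < α) (hb : 0 < b) (hΛ : 0 < Λ) (x : ℕ) :
    0 ≤ UBJ r s α b Λ x := by
  unfold UBJ
  have h1 : (0:ℝ) ≤ (x:ℝ) + b := by positivity
  have h2 : (0:ℝ) ≤ s*Λ := by positivity
  have h3 : (0:ℝ) ≤ |lcE r s α| := abs_nonneg _
  have h4 : (0:ℝ) ≤ |Real.log (s*Λ)| + |ltE r s α| + |Real.log b| + ((x:ℝ)+b) := by
    have := abs_nonneg (Real.log (s*Λ)); have := abs_nonneg (ltE r s α)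
    have := abs_nonneg (Real.log b); linarith
  nlinarith

lemma UBJ_le_linear (hr : 0 < r) (hs : 0 < s) (hα : 0 < α) (hb : 0 < b) (hΛ : 0 < Λ) (x : ℕ) :
    UBJ r s α b Λ x ≤ (s*Λ + b*|lcE r s α|
        + (|Real.log (s*Λ)| + |ltE r s α| + |Real.log b| + b) * (s*Λ) + ((s*Λ)^2 + s*Λ))
      + (|lcE r s α| + s*Λ) * x + 0 * (x:ℝ)^2 := by
  apply le_of_eq
  unfold UBJ
  ring

lemma outer_UBJ_abs_summable (hr : 0 < r) (hs : 0 < s) (hα : 0 < α) (hb : 0 < b) (hΛ : 0 < Λ) :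
    Summable fun x : ℕ => |poissonPMF (r*Λ) x * UBJ r s α b Λ x| := by
  have hn : (0:ℝ) < r*Λ := by positivity
  apply Summable.of_nonneg_of_le (fun x => abs_nonneg _)
    (f := fun x : ℕ => poissonPMF (r*Λ) x *
      ((s*Λ + b*|lcE r s α|
        + (|Real.log (s*Λ)| + |ltE r s α| + |Real.log b| + b) * (s*Λ) + ((s*Λ)^2 + s*Λ))
      + (|lcE r s α| + s*Λ) * x + 0 * (x:ℝ)^2))
  · intro x
    rw [abs_mul, abs_of_pos (poissonPMF_pos hn x), abs_of_nonneg (UBJ_nonneg hr hs hα hb hΛ x)]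
    exact mul_le_mul_of_nonneg_left (UBJ_le_linear hr hs hα hb hΛ x)
      (le_of_lt (poissonPMF_pos hn x))
  · exact poisson_poly_summable (r*Λ) _ _ _

lemma QE_poly (hr : 0 < r) (hs : 0 < s) (hα : 0 < α) (hb : 0 < b) (hΛ : 0 < Λ) (x : ℕ) :
    QE r s α b Λ x =
      ((s*Λ + (s*Λ)*(Real.log (s*Λ) - ltE r s α) - (s*Λ)*Real.log (uE r s b Λ) - vE r b Λ
          - ((s*Λ)^2+(s*Λ))/(uE r s b Λ))
        + (-lcE r s α - Real.log (uE r s b Λ) + 2 + Real.log (vE r b Λ)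
          - 2*(s*Λ)/(uE r s b Λ))*b - b^2/(uE r s b Λ))
      + ((-lcE r s α - Real.log (uE r s b Λ) + 2 + Real.log (vE r b Λ)
          - 2*(s*Λ)/(uE r s b Λ)) - 2*b/(uE r s b Λ)) * x
      + (-1/(uE r s b Λ)) * (x:ℝ)^2 := by
  have hu : uE r s b Λ ≠ 0 := by unfold uE; positivity
  unfold QE
  field_simp
  ring

lemma outer_Q (hr : 0 < r) (hs : 0 < s) (hα : 0 < α) (hb : 0 < b) (hΛ : 0 < Λ) :
    ∑' x : ℕ, poissonPMF (r*Λ) x * QE r s α b Λ x = EE r s α b Λ := by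
  have step : ∀ x : ℕ, poissonPMF (r*Λ) x * QE r s α b Λ x
      = poissonPMF (r*Λ) x *
      (((s*Λ + (s*Λ)*(Real.log (s*Λ) - ltE r s α) - (s*Λ)*Real.log (uE r s b Λ) - vE r b Λ
          - ((s*Λ)^2+(s*Λ))/(uE r s b Λ))
        + (-lcE r s α - Real.log (uE r s b Λ) + 2 + Real.log (vE r b Λ)
          - 2*(s*Λ)/(uE r s b Λ))*b - b^2/(uE r s b Λ))
      + (((-lcE r s α - Real.log (uE r s b Λ) + 2 + Real.log (vE r b Λ)
          - 2*(s*Λ)/(uE r s b Λ)) - 2*b/(uE r s b Λ))) * x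
      + (-1/(uE r s b Λ)) * (x:ℝ)^2) := by
    intro x
    rw [QE_poly hr hs hα hb hΛ x]
  rw [tsum_congr step, poisson_poly_tsum]
  unfold EE
  set lu := Real.log (uE r s b Λ) with hlu
  set lv := Real.log (vE r b Λ) with hlv
  have hu : r * Λ + b + s * Λ ≠ 0 := by positivity
  unfold uE vE
  field_simp
  ring

lemma outer_Q_abs_summable (hr : 0 < r) (hs : 0 < s) (hα : 0 < α) (hb : 0 < b) (hΛ : 0 < Λ) :
    Summable fun x : ℕ => |poissonPMF (r*Λ) x * QE r s α b Λ x| := by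
  have hn : (0:ℝ) < r*Λ := by positivity
  set A := ((s*Λ + (s*Λ)*(Real.log (s*Λ) - ltE r s α) - (s*Λ)*Real.log (uE r s b Λ) - vE r b Λ
          - ((s*Λ)^2+(s*Λ))/(uE r s b Λ))
        + (-lcE r s α - Real.log (uE r s b Λ) + 2 + Real.log (vE r b Λ)
          - 2*(s*Λ)/(uE r s b Λ))*b - b^2/(uE r s b Λ)) with hA
  set B := ((-lcE r s α - Real.log (uE r s b Λ) + 2 + Real.log (vE r b Λ)
          - 2*(s*Λ)/(uE r s b Λ)) - 2*b/(uE r s b Λ)) with hB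
  set C := (-1/(uE r s b Λ)) with hC
  apply Summable.of_nonneg_of_le (fun x => abs_nonneg _)
    (f := fun x : ℕ => poissonPMF (r*Λ) x * (|A| + |B| * x + |C| * (x:ℝ)^2))
  · intro x
    rw [abs_mul, abs_of_pos (poissonPMF_pos hn x)]
    apply mul_le_mul_of_nonneg_left _ (le_of_lt (poissonPMF_pos hn x))
    rw [QE_poly hr hs hα hb hΛ x]
    calc |A + B * x + C * (x:ℝ)^2| ≤ |A + B * x| + |C * (x:ℝ)^2| := abs_add_le _ _
      _ ≤ |A| + |B * x| + |C * (x:ℝ)^2| := by linarith [abs_add_le A (B * (x:ℝ))]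
      _ = |A| + |B| * x + |C| * (x:ℝ)^2 := by
          rw [abs_mul, abs_mul, Nat.abs_cast, abs_pow, Nat.abs_cast]
  · exact poisson_poly_summable (r*Λ) _ _ _

lemma tendsto_linear_ratio (a e c d : ℝ) (hc : 0 < c) :
    Tendsto (fun Λ : ℝ => (a*Λ + e)/(c*Λ + d)) atTop (𝓝 (a/c)) := by
  have h1 : Tendsto (fun Λ : ℝ => (a + e/Λ)/(c + d/Λ)) atTop (𝓝 (a/c)) := by
    have ha : Tendsto (fun Λ : ℝ => a + e/Λ) atTop (𝓝 a) := by
      have := tendsto_inv_atTop_zero (𝕜 := ℝ)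
      have h2 : Tendsto (fun Λ : ℝ => e * Λ⁻¹) atTop (𝓝 (e * 0)) := this.const_mul e
      rw [mul_zero] at h2
      have h3 := h2.const_add a
      rw [add_zero] at h3
      exact h3.congr (fun Λ => by rw [div_eq_mul_inv])
    have hcc : Tendsto (fun Λ : ℝ => c + d/Λ) atTop (𝓝 c) := by
      have := tendsto_inv_atTop_zero (𝕜 := ℝ)
      have h2 : Tendsto (fun Λ : ℝ => d * Λ⁻¹) atTop (𝓝 (d * 0)) := this.const_mul d
      rw [mul_zero] at h2
      have h3 := h2.const_add c
      rw [add_zero] at h3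
      exact h3.congr (fun Λ => by rw [div_eq_mul_inv])
    exact ha.div hcc (ne_of_gt hc)
  apply h1.congr'
  filter_upwards [eventually_gt_atTop (max 0 ((1+|d|)/c))] with Λ hΛ
  have hΛ0 : 0 < Λ := lt_of_le_of_lt (le_max_left _ _) hΛ
  have hcd : 0 < c*Λ + d := by
    have h4 : (1+|d|)/c < Λ := lt_of_le_of_lt (le_max_right _ _) hΛ
    have h5 : 1 + |d| < c * Λ := by
      rw [div_lt_iff₀ hc] at h4; linarith [h4]
    have := neg_abs_le d
    linarith
  field_simp

lemma CC_pos {r s α : ℝ} (hr : 0 < r) (hs : 0 < s) (hα : 0 < α) :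
    0 < s * Real.log (s/((s/(r+s+α))*(r+s))) + r * Real.log (r/(r+s)) - r * lcE r s α := by
  have hw : (0:ℝ) < r + s + α := by positivity
  have e1 : s/((s/(r+s+α))*(r+s)) = (r+s+α)/(r+s) := by
    field_simp
  rw [e1]
  unfold lcE
  -- logs as differences
  have l1 : Real.log ((r+s+α)/(r+s)) = Real.log (r+s+α) - Real.log (r+s) :=
    Real.log_div (by positivity) (by positivity)
  have l2 : Real.log (r/(r+s)) = Real.log r - Real.log (r+s) :=
    Real.log_div (by positivity) (by positivity)
  have l3 : Real.log ((r+α)/(r+s+α)) = Real.log (r+α) - Real.log (r+s+α) :=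
    Real.log_div (by positivity) (by positivity)
  -- strict tangent bounds
  have h1 : 1 - (r+s)/(r+s+α) < Real.log (r+s+α) - Real.log (r+s) := by
    have := one_sub_inv_lt_log (x := (r+s+α)/(r+s)) (by positivity)
      (by
        intro h
        rw [div_eq_one_iff_eq (by positivity : r+s ≠ 0)] at h
        linarith)
    rw [l1] at this
    have e2 : 1/((r+s+α)/(r+s)) = (r+s)/(r+s+α) := by
      rw [one_div, inv_div]
    rw [e2] at this
    exact this
  have hz : (0:ℝ) < (r*(r+s+α))/((r+s)*(r+α)) := by positivity
  have hzne : (r*(r+s+α))/((r+s)*(r+α)) ≠ 1 := by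
    intro h
    rw [div_eq_one_iff_eq (by positivity : (r+s)*(r+α) ≠ 0)] at h
    nlinarith
  have h2 : 1 - ((r+s)*(r+α))/(r*(r+s+α))
      < Real.log r + Real.log (r+s+α) - Real.log (r+s) - Real.log (r+α) := by
    have := one_sub_inv_lt_log hz hzne
    have lz : Real.log ((r*(r+s+α))/((r+s)*(r+α)))
        = Real.log r + Real.log (r+s+α) - Real.log (r+s) - Real.log (r+α) := by
      rw [Real.log_div (by positivity) (by positivity), Real.log_mul (by positivity) (by positivity),
        Real.log_mul (by positivity) (by positivity)]
      ring
    have ez : 1/((r*(r+s+α))/((r+s)*(r+α))) = ((r+s)*(r+α))/(r*(r+s+α)) := by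
      rw [one_div, inv_div]
    rw [lz, ez] at this
    exact this
  have e3 : s * (1 - (r+s)/(r+s+α)) = s*α/(r+s+α) := by
    field_simp
    ring
  have e4 : r * (1 - ((r+s)*(r+α))/(r*(r+s+α))) = -(s*α)/(r+s+α) := by
    field_simp
    ring
  have hs1 := mul_lt_mul_of_pos_left h1 hs
  have hs2 := mul_lt_mul_of_pos_left h2 hr
  rw [e3] at hs1
  rw [e4] at hs2
  have hadd := add_lt_add hs1 hs2
  have heq0 : s*α/(r+s+α) + (-(s*α)/(r+s+α)) = 0 := by ring
  have hfin : 0 < s * (Real.log (r+s+α) - Real.log (r+s))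
      + r * (Real.log r + Real.log (r+s+α) - Real.log (r+s) - Real.log (r+α)) := by
    linarith [hadd, heq0]
  rw [l1, l2, l3]
  calc (0:ℝ) < s * (Real.log (r+s+α) - Real.log (r+s))
      + r * (Real.log r + Real.log (r+s+α) - Real.log (r+s) - Real.log (r+α)) := hfin
    _ = s * (Real.log (r+s+α) - Real.log (r+s)) + r * (Real.log r - Real.log (r+s))
        - r * (Real.log (r+α) - Real.log (r+s+α)) := by ring

lemma EE_tendsto {r s α b : ℝ} (hr : 0 < r) (hs : 0 < s) (hα : 0 < α) (hb : 0 < b) :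
    Tendsto (fun Λ => EE r s α b Λ) atTop atTop := by
  set w := r + s + α with hw
  have hw0 : (0:ℝ) < w := by positivity
  set G : ℝ → ℝ := fun Λ =>
    ((s * Real.log ((s*Λ)/((s/w)*(uE r s b Λ)))
      + ((r*Λ+b)/Λ) * Real.log ((vE r b Λ)/(uE r s b Λ)))
      - ((r*Λ+b)/Λ) * lcE r s α)
      - ((r*Λ+s*Λ)/(uE r s b Λ)) * (1/Λ) with hG
  -- limit of G
  have T1 : Tendsto (fun Λ : ℝ => (s*Λ)/((s/w)*(uE r s b Λ))) atTop
      (𝓝 (s/((s/w)*(r+s)))) := by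
    have := tendsto_linear_ratio s 0 ((s/w)*(r+s)) ((s/w)*b) (by positivity)
    have he : ∀ Λ : ℝ, (s*Λ + 0)/(((s/w)*(r+s))*Λ + (s/w)*b) = (s*Λ)/((s/w)*(uE r s b Λ)) := by
      intro Λ
      unfold uE
      ring_nf
    have h2 := this.congr he
    have he2 : s/((s/w)*(r+s)) = s/((s/w)*(r+s)) := rfl
    exact h2
  have T1l : Tendsto (fun Λ : ℝ => s * Real.log ((s*Λ)/((s/w)*(uE r s b Λ)))) atTop
      (𝓝 (s * Real.log (s/((s/w)*(r+s))))) := by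
    apply Tendsto.const_mul
    exact T1.log (by positivity)
  have T2 : Tendsto (fun Λ : ℝ => (r*Λ+b)/Λ) atTop (𝓝 r) := by
    have := tendsto_linear_ratio r b 1 0 one_pos
    have he : ∀ Λ : ℝ, (r*Λ + b)/(1*Λ + 0) = (r*Λ+b)/Λ := by intro Λ; ring_nf
    have h2 := this.congr he
    rw [div_one] at h2
    exact h2
  have T3 : Tendsto (fun Λ : ℝ => (vE r b Λ)/(uE r s b Λ)) atTop (𝓝 (r/(r+s))) := by
    have := tendsto_linear_ratio r b (r+s) b (by positivity)
    apply this.congr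
    intro Λ
    unfold uE vE
    ring_nf
  have T23 : Tendsto (fun Λ : ℝ => ((r*Λ+b)/Λ) * Real.log ((vE r b Λ)/(uE r s b Λ)))
      atTop (𝓝 (r * Real.log (r/(r+s)))) :=
    T2.mul (T3.log (by positivity))
  have Tlc : Tendsto (fun Λ : ℝ => ((r*Λ+b)/Λ) * lcE r s α) atTop (𝓝 (r * lcE r s α)) :=
    T2.mul_const _
  have T4a : Tendsto (fun Λ : ℝ => (r*Λ+s*Λ)/(uE r s b Λ)) atTop (𝓝 ((r+s)/(r+s))) := by
    have := tendsto_linear_ratio (r+s) 0 (r+s) b (by positivity)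
    apply this.congr
    intro Λ
    unfold uE
    ring_nf
  have T4 : Tendsto (fun Λ : ℝ => ((r*Λ+s*Λ)/(uE r s b Λ)) * (1/Λ)) atTop (𝓝 0) := by
    have hz : Tendsto (fun Λ : ℝ => 1/Λ) atTop (𝓝 0) := by
      simpa [one_div] using tendsto_inv_atTop_zero (𝕜 := ℝ)
    have := T4a.mul hz
    rw [mul_zero] at this
    exact this
  have hGlim : Tendsto G atTop
      (𝓝 (((s * Real.log (s/((s/w)*(r+s))) + r * Real.log (r/(r+s))) - r * lcE r s α) - 0)) :=
    ((T1l.add T23).sub Tlc).sub T4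
  rw [sub_zero] at hGlim
  have hCpos : 0 < (s * Real.log (s/((s/w)*(r+s))) + r * Real.log (r/(r+s))) - r * lcE r s α := by
    have := CC_pos hr hs hα
    rw [hw]
    linarith [this]
  -- eventual equality EE/Λ = G Λ
  have hEq : ∀ᶠ Λ in atTop, EE r s α b Λ / Λ = G Λ := by
    filter_upwards [eventually_gt_atTop 0] with Λ hΛ
    have hu0 : (0:ℝ) < r*Λ + b + s*Λ := by positivity
    have hv0 : (0:ℝ) < r*Λ + b := by positivity
    have hm0 : (0:ℝ) < s*Λ := by positivity
    have hsw : (0:ℝ) < s/w := by positivity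
    have huE : (0:ℝ) < uE r s b Λ := by unfold uE; positivity
    have hl1 : Real.log ((s*Λ)/((s/w)*(uE r s b Λ)))
        = Real.log (s*Λ) - ltE r s α - Real.log (uE r s b Λ) := by
      have hx1 : (0:ℝ) < s/w * uE r s b Λ := by positivity
      rw [Real.log_div (ne_of_gt hm0) (ne_of_gt hx1),
        Real.log_mul (ne_of_gt hsw) (ne_of_gt huE)]
      unfold ltE
      rw [hw]
      ring
    have hl2 : Real.log ((vE r b Λ)/(uE r s b Λ))
        = Real.log (vE r b Λ) - Real.log (uE r s b Λ) := by
      have hvE : (0:ℝ) < vE r b Λ := by unfold vE; positivity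
      exact Real.log_div (by positivity) (by positivity)
    simp only [hG]
    rw [hl1, hl2]
    unfold EE
    unfold uE vE
    field_simp
    ring
  have hfrac : Tendsto (fun Λ : ℝ => EE r s α b Λ / Λ) atTop
      (𝓝 ((s * Real.log (s/((s/w)*(r+s))) + r * Real.log (r/(r+s))) - r * lcE r s α)) :=
    hGlim.congr' (hEq.mono fun Λ h => h.symm)
  have hmul : Tendsto (fun Λ : ℝ => Λ * (EE r s α b Λ / Λ)) atTop atTop :=
    Filter.Tendsto.atTop_mul_pos hCpos tendsto_id hfrac
  apply hmul.congr'
  filter_upwards [eventually_gt_atTop 0] with Λ hΛ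
  field_simp


theorem gamma_prior_risk_unbounded
    (d : ℕ) (hd : 1 ≤ d) (r s : ℝ) (hr : 0 < r) (hs : 0 < s)
    (β : Fin d → ℝ) (hβ : ∀ i, 0 < β i)
    (αg : Fin d → ℝ) (hαg : ∀ i, 0 < αg i) :
    ∀ M : ℝ, 0 < M → ∃ lam ∈ posOrthant d,
      M < klRisk (fun _ => r) (fun _ => s) lam (fun x y => gammaPred r s β αg x y) := by
  intro M hM
  haveI : Nonempty (Fin d) := ⟨⟨0, hd⟩⟩
  -- choose Λ large enough
  have hEV : ∀ᶠ Λ in (atTop : Filter ℝ), (∀ i : Fin d, M < EE r s (αg i) (β i) Λ) ∧ 1 ≤ Λ :=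
    (Filter.eventually_all.mpr fun i =>
      (EE_tendsto hr hs (hαg i) (hβ i)).eventually_gt_atTop M).and (eventually_ge_atTop 1)
  obtain ⟨Λ, hΛM, hΛ1⟩ := hEV.exists
  have hΛ : (0:ℝ) < Λ := lt_of_lt_of_le one_pos hΛ1
  refine ⟨fun _ => Λ, fun i => hΛ, ?_⟩
  set lam : Fin d → ℝ := fun _ => Λ with hlam
  have hm : (0:ℝ) < s*Λ := by positivity
  have hn : (0:ℝ) < r*Λ := by positivity
  -- abbreviations
  set pm : ℕ → ℝ := poissonPMF (s*Λ) with hpm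
  set pn : ℕ → ℝ := poissonPMF (r*Λ) with hpn
  have hpm_abs : Summable fun k => |pm k| := (poisson_summable _).abs
  have hpn_abs : Summable fun k => |pn k| := (poisson_summable _).abs
  have hpm1 : ∑' k, pm k = 1 := poisson_tsum _
  have hpn1 : ∑' k, pn k = 1 := poisson_tsum _
  have hPx : ∀ x : Fin d → ℕ, prodPoisson (fun _ => r) lam x = ∏ j, pn (x j) := by
    intro x; rfl
  have hPy : ∀ y : Fin d → ℕ, prodPoisson (fun _ => s) lam y = ∏ j, pm (y j) := by
    intro y; rfl
  -- log decomposition of the ratio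
  have hlog : ∀ x y : Fin d → ℕ,
      Real.log (prodPoisson (fun _ => s) lam y / gammaPred r s β αg x y)
      = ∑ i, L1 r s (αg i) (β i) Λ (x i) (y i) := by
    intro x y
    have hratio : prodPoisson (fun _ => s) lam y / gammaPred r s β αg x y
        = ∏ i, (poissonPMF (s*Λ) (y i) / q1 r s (αg i) (β i) (x i) (y i)) := by
      rw [Finset.prod_div_distrib]
      rfl
    rw [hratio, Real.log_prod]
    · exact Finset.sum_congr rfl fun i _ => rfl
    · intro i _
      exact ne_of_gt (div_pos (poissonPMF_pos hm (y i))
        (q1_pos hr hs (hαg i) (hβ i) (x i) (y i)))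
  -- inner sum identity
  have hw_in : ∀ (i : Fin d) (t : ℕ),
      Summable fun k => |pm k * L1 r s (αg i) (β i) Λ t k| := fun i t =>
    inner_abs_summable hr hs (hαg i) (hβ i) hΛ t
  have hInner : ∀ x : Fin d → ℕ,
      (∑' y : Fin d → ℕ, prodPoisson (fun _ => s) lam y *
        Real.log (prodPoisson (fun _ => s) lam y / gammaPred r s β αg x y))
      = ∑ i, ∑' k, pm k * L1 r s (αg i) (β i) Λ (x i) k := by
    intro x
    have step1 : ∀ y : Fin d → ℕ, prodPoisson (fun _ => s) lam y *
        Real.log (prodPoisson (fun _ => s) lam y / gammaPred r s β αg x y)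
        = ∑ i, (∏ j, pm (y j)) * L1 r s (αg i) (β i) Λ (x i) (y i) := by
      intro y
      rw [hlog x y, hPy y, Finset.mul_sum]
    rw [tsum_congr step1,
      Summable.tsum_finsetSum (fun i _ => pi_weight_summable pm _ hpm_abs (hw_in i (x i)) i)]
    exact Finset.sum_congr rfl fun i _ =>
      pi_weight_tsum pm _ hpm_abs hpm1 (hw_in i (x i)) i
  -- outer comparison
  have hQabs : ∀ i : Fin d, Summable fun t : ℕ => |pn t * QE r s (αg i) (β i) Λ t| := fun i =>
    outer_Q_abs_summable hr hs (hαg i) (hβ i) hΛ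
  have hUabs : ∀ i : Fin d, Summable fun t : ℕ => |pn t * UBJ r s (αg i) (β i) Λ t| := fun i =>
    outer_UBJ_abs_summable hr hs (hαg i) (hβ i) hΛ
  have hSumQ : Summable fun x : Fin d → ℕ =>
      ∑ i, (∏ j, pn (x j)) * QE r s (αg i) (β i) Λ (x i) :=
    summable_sum fun i _ => pi_weight_summable pn _ hpn_abs (hQabs i) i
  have hSumU : Summable fun x : Fin d → ℕ =>
      ∑ i, (∏ j, pn (x j)) * UBJ r s (αg i) (β i) Λ (x i) :=
    summable_sum fun i _ => pi_weight_summable pn _ hpn_abs (hUabs i) i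
  have hprod_nonneg : ∀ x : Fin d → ℕ, 0 ≤ ∏ j, pn (x j) := fun x =>
    Finset.prod_nonneg fun j _ => le_of_lt (poissonPMF_pos hn (x j))
  have hSumJ : Summable fun x : Fin d → ℕ =>
      (∏ j, pn (x j)) * ∑ i, ∑' k, pm k * L1 r s (αg i) (β i) Λ (x i) k := by
    apply Summable.of_norm_bounded
      (g := fun x : Fin d → ℕ => ∑ i, (∏ j, pn (x j)) * UBJ r s (αg i) (β i) Λ (x i)) hSumU
    intro x
    rw [Real.norm_eq_abs, abs_mul, abs_of_nonneg (hprod_nonneg x)]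
    calc (∏ j, pn (x j)) * |∑ i, ∑' k, pm k * L1 r s (αg i) (β i) Λ (x i) k|
        ≤ (∏ j, pn (x j)) * ∑ i, UBJ r s (αg i) (β i) Λ (x i) := by
          apply mul_le_mul_of_nonneg_left _ (hprod_nonneg x)
          calc |∑ i, ∑' k, pm k * L1 r s (αg i) (β i) Λ (x i) k|
              ≤ ∑ i, |∑' k, pm k * L1 r s (αg i) (β i) Λ (x i) k| :=
                Finset.abs_sum_le_sum_abs _ _
            _ ≤ ∑ i, UBJ r s (αg i) (β i) Λ (x i) :=
                Finset.sum_le_sum fun i _ => J_ub hr hs (hαg i) (hβ i) hΛ (x i)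
      _ = ∑ i, (∏ j, pn (x j)) * UBJ r s (αg i) (β i) Λ (x i) := Finset.mul_sum _ _ _
  -- the key chain
  have hlb : (∑' x : Fin d → ℕ, ∑ i, (∏ j, pn (x j)) * QE r s (αg i) (β i) Λ (x i))
      ≤ klRisk (fun _ => r) (fun _ => s) lam (fun x y => gammaPred r s β αg x y) := by
    unfold klRisk
    have hcongr : ∀ x : Fin d → ℕ,
        prodPoisson (fun _ => r) lam x *
          (∑' y : Fin d → ℕ, prodPoisson (fun _ => s) lam y *
            Real.log (prodPoisson (fun _ => s) lam y / gammaPred r s β αg x y))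
        = (∏ j, pn (x j)) * ∑ i, ∑' k, pm k * L1 r s (αg i) (β i) Λ (x i) k := by
      intro x
      rw [hPx x, hInner x]
    rw [tsum_congr hcongr]
    apply Summable.tsum_le_tsum _ hSumQ hSumJ
    intro x
    calc ∑ i, (∏ j, pn (x j)) * QE r s (αg i) (β i) Λ (x i)
        = (∏ j, pn (x j)) * ∑ i, QE r s (αg i) (β i) Λ (x i) := (Finset.mul_sum _ _ _).symm
      _ ≤ (∏ j, pn (x j)) * ∑ i, ∑' k, pm k * L1 r s (αg i) (β i) Λ (x i) k := by
          apply mul_le_mul_of_nonneg_left _ (hprod_nonneg x)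
          exact Finset.sum_le_sum fun i _ => J_lb hr hs (hαg i) (hβ i) hΛ (x i)
  have hval : (∑' x : Fin d → ℕ, ∑ i, (∏ j, pn (x j)) * QE r s (αg i) (β i) Λ (x i))
      = ∑ i, EE r s (αg i) (β i) Λ := by
    rw [Summable.tsum_finsetSum (fun i _ => pi_weight_summable pn _ hpn_abs (hQabs i) i)]
    exact Finset.sum_congr rfl fun i _ => by
      rw [pi_weight_tsum pn _ hpn_abs hpn1 (hQabs i) i, outer_Q hr hs (hαg i) (hβ i) hΛ]
  have hMlt : M < ∑ i, EE r s (αg i) (β i) Λ := by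
    have h1 : ∑ _i : Fin d, M < ∑ i, EE r s (αg i) (β i) Λ :=
      Finset.sum_lt_sum_of_nonempty Finset.univ_nonempty (fun i _ => hΛM i)
    have h2 : ∑ _i : Fin d, M = (d:ℝ) * M := by
      rw [Finset.sum_const, Finset.card_univ, Fintype.card_fin, nsmul_eq_mul]
    have h3 : M ≤ (d:ℝ) * M := by
      have : (1:ℝ) ≤ (d:ℝ) := by exact_mod_cast hd
      nlinarith
    linarith [h1, h2.symm.trans_le (le_refl _)]
  calc M < ∑ i, EE r s (αg i) (β i) Λ := hMlt
    _ = ∑' x : Fin d → ℕ, ∑ i, (∏ j, pn (x j)) * QE r s (αg i) (β i) Λ (x i) := hval.symm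
    _ ≤ _ := hlb
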